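/- If two utility vectors u and w in ℕ^n have equal total sums and u Lorenz dominates w, then the product Π_i u_i ≥ Π_i w_i. -/

import Mathlib

namespace LorenzAux

def S (l : List ℕ) (k : ℕ) : ℕ := (l.take k).sum

lemma S_succ (l : List ℕ) (k : ℕ) (h : k < l.length) : S l (k+1) = S l k + l[k] := by
  simp only [S, List.take_succ, List.getElem?_eq_getElem h, Option.toList_some,
    List.sum_append, List.sum_cons, List.sum_nil, add_zero]

lemma S_of_le (l : List ℕ) {k : ℕ} (h : l.length ≤ k) : S l k = l.sum := by
  simp [S, List.take_of_length_le h]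

lemma S_set (l : List ℕ) (i v k : ℕ) (hi : i < l.length) :
    S (l.set i v) k + (if i < k then l[i] else 0) = S l k + (if i < k then v else 0) := by
  induction l generalizing i k with
  | nil => simp at hi
  | cons x t ih =>
    cases i with
    | zero =>
      cases k with
      | zero => simp [S]
      | succ m => simp [S]; omega
    | succ s =>
      cases k with
      | zero => simp [S]
      | succ m =>
        have := ih s m (by simpa using hi)
        simp only [List.set_cons_succ, S, List.take_succ_cons, List.sum_cons,
          List.getElem_cons_succ, Nat.succ_lt_succ_iff] at this ⊢
        omega

lemma prod_set_mul (l : List ℕ) (i v : ℕ) (hi : i < l.length) :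
    (l.set i v).prod * l[i] = l.prod * v := by
  induction l generalizing i with
  | nil => simp at hi
  | cons x t ih =>
    cases i with
    | zero => simp; ring
    | succ s =>
      have := ih s (by simpa using hi)
      simp only [List.set_cons_succ, List.prod_cons, List.getElem_cons_succ]
      rw [mul_assoc, this, mul_assoc]

lemma eq_of_S_eq : ∀ (a b : List ℕ), a.length = b.length → (∀ k, S a k = S b k) → a = b := by
  intro a
  induction a with
  | nil => intro b hl _; exact (List.length_eq_zero_iff.mp hl.symm).symm
  | cons x t ih =>
    intro b hl hS
    cases b with
    | nil => simp at hl
    | cons y s =>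
      have h1 := hS 1
      simp [S] at h1
      subst h1
      have : t = s := by
        refine ih s (by simpa using hl) (fun k => ?_)
        have := hS (k+1)
        simp only [S, List.take_succ_cons, List.sum_cons] at this ⊢
        omega
      rw [this]

lemma sorted_get_le {l : List ℕ} (h : l.Pairwise (· ≤ ·)) {p q : ℕ} (hpq : p ≤ q)
    (hq : q < l.length) : l[p]'(lt_of_le_of_lt hpq hq) ≤ l[q] := by
  rcases eq_or_lt_of_le hpq with rfl | hlt
  · exact le_refl _
  · exact List.pairwise_iff_get.mp h ⟨p, lt_of_le_of_lt hpq hq⟩ ⟨q, hq⟩ hlt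

lemma S_agree (a b : List ℕ) (k : ℕ) (h : ∀ m < k, a[m]? = b[m]?)
    (hk : k ≤ a.length) (hk' : k ≤ b.length) : S a k = S b k := by
  induction k with
  | zero => simp [S]
  | succ m ih =>
    have hma : m < a.length := by omega
    have hmb : m < b.length := by omega
    rw [S_succ a m hma, S_succ b m hmb,
      ih (fun p hp => h p (by omega)) (by omega) (by omega)]
    have := h m (by omega)
    rw [List.getElem?_eq_getElem hma, List.getElem?_eq_getElem hmb] at this
    simp only [Option.some.injEq] at this
    omega

lemma S_strict (a b : List ℕ) (hlen : a.length = b.length) (i₀ : ℕ) (hi₀ : i₀ < b.length)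
    (heq : S a i₀ = S b i₀) (hstrict : b[i₀]'hi₀ < a[i₀]'(by omega)) :
    ∀ k, i₀ < k → k ≤ b.length →
      (∀ m (hm : m < b.length), i₀ < m → m < k → b[m] ≤ a[m]'(by omega)) →
      S b k < S a k := by
  intro k
  induction k with
  | zero => omega
  | succ m ih =>
    intro h1 h2 hpt
    rcases Nat.lt_or_ge i₀ m with hm | hm
    · have hmlen : m < b.length := by omega
      have hrec := ih hm (by omega) (fun p hp h1 h2 => hpt p hp h1 (by omega))
      rw [S_succ b m hmlen, S_succ a m (by omega)]
      have := hpt m hmlen hm (by omega)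
      omega
    · have hmeq : m = i₀ := by omega
      subst hmeq
      rw [S_succ b m hi₀, S_succ a m (by omega)]
      omega

lemma mul_transfer {x y : ℕ} (h : x + 2 ≤ y) : x * y ≤ (x + 1) * (y - 1) := by
  obtain ⟨z, rfl⟩ : ∃ z, y = z + 1 := ⟨y - 1, by omega⟩
  have hxz : x ≤ z := by omega
  calc x * (z + 1) = x * z + x := by ring
    _ ≤ x * z + z := by omega
    _ = (x + 1) * ((z + 1) - 1) := by simp [Nat.add_sub_cancel]; ring

lemma step (a b : List ℕ) (ha : a.Pairwise (· ≤ ·)) (hb : b.Pairwise (· ≤ ·))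
    (hlen : a.length = b.length) (hsum : a.sum = b.sum)
    (hdom : ∀ k, S b k ≤ S a k) (hne : a ≠ b) :
    ∃ b' : List ℕ, b'.Pairwise (· ≤ ·) ∧ b'.length = b.length ∧ b'.sum = b.sum ∧
      (∀ k, S b k ≤ S b' k) ∧ (∀ k, S b' k ≤ S a k) ∧
      (∃ k ≤ b.length, S b k < S b' k) ∧ b.prod ≤ b'.prod := by
  classical
  -- first index where they differ
  have hex : ∃ m : ℕ, ¬ (a[m]? = b[m]?) := by
    by_contra h
    push_neg at h
    exact hne (List.ext_getElem? h)
  set i₀ := Nat.find hex with hi₀def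
  have hP : ¬ (a[i₀]? = b[i₀]?) := Nat.find_spec hex
  have hmin : ∀ m < i₀, a[m]? = b[m]? := fun m hm => not_not.mp (Nat.find_min hex hm)
  have hi₀len : i₀ < b.length := by
    by_contra h
    push_neg at h
    exact hP (by rw [List.getElem?_eq_none (by omega), List.getElem?_eq_none h])
  have hi₀lena : i₀ < a.length := by omega
  have heqS : S a i₀ = S b i₀ := S_agree a b i₀ hmin (by omega) (by omega)
  have hib : b[i₀]'hi₀len < a[i₀]'hi₀lena := by
    have h1 := hdom (i₀+1)
    rw [S_succ a i₀ hi₀lena, S_succ b i₀ hi₀len] at h1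
    have hne2 : a[i₀]'hi₀lena ≠ b[i₀]'hi₀len := by
      intro h
      exact hP (by rw [List.getElem?_eq_getElem hi₀lena, List.getElem?_eq_getElem hi₀len, h])
    omega
  -- first index where b exceeds a
  have hQ : ∃ m, m < b.length ∧ a.getD m 0 < b.getD m 0 := by
    by_contra h
    push_neg at h
    have hstr := S_strict a b hlen i₀ hi₀len heqS hib b.length (by omega) le_rfl
      (fun m hm _ _ => by
        have := h m hm
        rwa [List.getD_eq_getElem a 0 (by omega), List.getD_eq_getElem b 0 hm] at this)
    rw [S_of_le a (by omega), S_of_le b le_rfl] at hstr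
    omega
  set j₀ := Nat.find hQ with hj₀def
  have hQspec := Nat.find_spec hQ
  have hj₀len : j₀ < b.length := hQspec.1
  have hj₀lena : j₀ < a.length := by omega
  have hj₀ : a[j₀]'hj₀lena < b[j₀]'hj₀len := by
    have := hQspec.2
    rwa [List.getD_eq_getElem a 0 hj₀lena, List.getD_eq_getElem b 0 hj₀len] at this
  have hj₀min : ∀ m (hm : m < b.length), m < j₀ → b[m] ≤ a[m]'(by omega) := by
    intro m hm hmj
    have := Nat.find_min hQ hmj
    push_neg at this
    have := this hm
    rwa [List.getD_eq_getElem a 0 (by omega), List.getD_eq_getElem b 0 hm] at this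
  have hi₀j₀ : i₀ < j₀ := by
    rcases Nat.lt_trichotomy i₀ j₀ with h | h | h
    · exact h
    · exfalso
      have hibD : b.getD i₀ 0 < a.getD i₀ 0 := by
        rw [List.getD_eq_getElem a 0 hi₀lena, List.getD_eq_getElem b 0 hi₀len]; exact hib
      have hj₀D : a.getD j₀ 0 < b.getD j₀ 0 := by
        rw [List.getD_eq_getElem a 0 hj₀lena, List.getD_eq_getElem b 0 hj₀len]; exact hj₀
      rw [h] at hibD
      omega
    · exfalso
      have := hmin j₀ h
      rw [List.getElem?_eq_getElem hj₀lena, List.getElem?_eq_getElem hj₀len] at this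
      simp only [Option.some.injEq] at this
      omega
  -- last occurrence of b[i₀]'s value
  set Pi : ℕ → Prop := fun q => q < b.length ∧ b.getD q 0 = b.getD i₀ 0 with hPidef
  have hi₀P : Pi i₀ := ⟨hi₀len, rfl⟩
  set i' := Nat.findGreatest Pi (b.length - 1) with hi'def
  have hi'P : Pi i' := Nat.findGreatest_spec (m := i₀) (by omega) hi₀P
  have hi₀i' : i₀ ≤ i' := Nat.le_findGreatest (by omega) hi₀P
  have hi'len : i' < b.length := hi'P.1
  have hi'val : b[i']'hi'len = b[i₀]'hi₀len := by
    have := hi'P.2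
    rwa [List.getD_eq_getElem b 0 hi'len, List.getD_eq_getElem b 0 hi₀len] at this
  have hlast : ∀ q (hq : q < b.length), i' < q → b[i']'hi'len < b[q] := by
    intro q hq hlt
    have hng : ¬ Pi q := Nat.findGreatest_is_greatest hlt (by omega)
    have hle := sorted_get_le hb (le_of_lt hlt) hq
    rcases eq_or_lt_of_le hle with h | h
    · exfalso
      exact hng ⟨hq, by rw [List.getD_eq_getElem b 0 hq, List.getD_eq_getElem b 0 hi₀len,
        ← h, hi'val]⟩
    · exact h
  -- first occurrence of b[j₀]'s value
  have hQ2 : ∃ p, p < b.length ∧ b.getD p 0 = b.getD j₀ 0 := ⟨j₀, hj₀len, rfl⟩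
  set j'' := Nat.find hQ2 with hj''def
  have hj''P := Nat.find_spec hQ2
  have hj''len : j'' < b.length := hj''P.1
  have hj''le : j'' ≤ j₀ := Nat.find_le ⟨hj₀len, rfl⟩
  have hj''val : b[j'']'hj''len = b[j₀]'hj₀len := by
    have := hj''P.2
    rwa [List.getD_eq_getElem b 0 hj''len, List.getD_eq_getElem b 0 hj₀len] at this
  have hfirst : ∀ p (hp : p < j''), b[p]'(by omega) < b[j'']'hj''len := by
    intro p hp
    have hng : ¬ (p < b.length ∧ b.getD p 0 = b.getD j₀ 0) := Nat.find_min hQ2 hp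
    push_neg at hng
    have hplen : p < b.length := by omega
    have hne3 := hng hplen
    rw [List.getD_eq_getElem b 0 hplen, List.getD_eq_getElem b 0 hj₀len] at hne3
    have hle := sorted_get_le hb (le_of_lt hp) hj''len
    rcases eq_or_lt_of_le hle with h | h
    · exact absurd (h.trans hj''val) hne3
    · exact h
  -- the gap
  have hgap : b[i']'hi'len + 2 ≤ b[j'']'hj''len := by
    have h1 : a[i₀]'hi₀lena ≤ a[j₀]'hj₀lena := sorted_get_le ha (le_of_lt hi₀j₀) hj₀lena
    rw [hi'val, hj''val]
    omega
  have hi'j'' : i' < j'' := by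
    by_contra h
    push_neg at h
    have := sorted_get_le hb h hi'len
    omega
  -- the transfer
  set l1 := b.set i' (b[i']'hi'len + 1) with hl1def
  have hl1len : l1.length = b.length := by simp [hl1def]
  have hj''l1 : j'' < l1.length := by omega
  have hl1j : l1[j'']'hj''l1 = b[j'']'hj''len := by
    have hne4 : i' ≠ j'' := by omega
    simp [hl1def, List.getElem_set, hne4]
  set v := b[j'']'hj''len - 1 with hvdef
  set b2 := l1.set j'' v with hb2def
  have hb2lenl1 : b2.length = l1.length := by simp [hb2def]
  have hb2len : b2.length = b.length := by rw [hb2lenl1, hl1len]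
  -- master prefix-sum identity
  have hS2 : ∀ k, S b2 k = S b k + (if i' < k ∧ k ≤ j'' then 1 else 0) := by
    intro k
    have h1 := S_set b i' (b[i']'hi'len + 1) k hi'len
    rw [← hl1def] at h1
    have h2 := S_set l1 j'' v k hj''l1
    rw [hl1j, ← hb2def] at h2
    split_ifs at h1 h2 ⊢ <;> omega
  have hsum2 : b2.sum = b.sum := by
    have h := hS2 b.length
    rw [S_of_le b2 (by omega), S_of_le b le_rfl, if_neg (by omega)] at h
    omega
  -- getElem description of b2
  have hget2 : ∀ (m : ℕ) (hm : m < b.length), b2[m]'(by omega) =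
      if j'' = m then v else if i' = m then b[i']'hi'len + 1 else b[m] := by
    intro m hm
    simp [hb2def, hl1def, List.getElem_set]
  have hbb : ∀ (p q : ℕ) (hq : q < b.length) (hpq : p ≤ q), b[p]'(by omega) ≤ b[q] :=
    fun p q hq hpq => sorted_get_le hb hpq hq
  have hsorted2 : b2.Pairwise (· ≤ ·) := by
    refine List.pairwise_iff_get.mpr ?_
    intro p q hpq
    have hpq' : (p : ℕ) < (q : ℕ) := hpq
    have hql : (q : ℕ) < b.length := by have := q.2; omega
    have hpl : (p : ℕ) < b.length := by omega
    rw [List.get_eq_getElem, List.get_eq_getElem, hget2 p hpl, hget2 q hql]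
    split_ifs
    · omega
    · omega
    · have := hbb j'' q hql (by omega); omega
    · omega
    · omega
    · have := hlast q hql (by omega); omega
    · have := hfirst p (by omega); omega
    · have := hbb p i' hi'len (by omega); omega
    · have := hbb p q hql (by omega); omega
  have hprod : b.prod ≤ b2.prod := by
    have e1 := prod_set_mul b i' (b[i']'hi'len + 1) hi'len
    rw [← hl1def] at e1
    have e2 := prod_set_mul l1 j'' v hj''l1
    rw [hl1j, ← hb2def] at e2
    rcases Nat.eq_zero_or_pos (b[i']'hi'len) with h0 | h0
    · have hz : b.prod = 0 := List.prod_eq_zero (by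
        have hm := List.getElem_mem hi'len
        rwa [h0] at hm)
      rw [hz]
      exact Nat.zero_le _
    · have hineq := mul_transfer hgap
      rw [← hvdef] at hineq
      have hkey : b.prod * (b[i']'hi'len * b[j'']'hj''len)
          ≤ b2.prod * (b[i']'hi'len * b[j'']'hj''len) := by
        calc b.prod * (b[i']'hi'len * b[j'']'hj''len)
            ≤ b.prod * ((b[i']'hi'len + 1) * v) := Nat.mul_le_mul_left _ hineq
          _ = (b.prod * (b[i']'hi'len + 1)) * v := by ring
          _ = (l1.prod * b[i']'hi'len) * v := by rw [e1]
          _ = (l1.prod * v) * b[i']'hi'len := by ring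
          _ = (b2.prod * b[j'']'hj''len) * b[i']'hi'len := by rw [e2]
          _ = b2.prod * (b[i']'hi'len * b[j'']'hj''len) := by ring
      exact Nat.le_of_mul_le_mul_right hkey (Nat.mul_pos h0 (by omega))
  refine ⟨b2, hsorted2, hb2len, hsum2, ?_, ?_, ⟨i' + 1, by omega, ?_⟩, hprod⟩
  · intro k
    rw [hS2 k]
    split_ifs <;> omega
  · intro k
    rw [hS2 k]
    split_ifs with hk
    · have hstr := S_strict a b hlen i₀ hi₀len heqS hib k (by omega) (by omega)
        (fun m hm h1 h2 => hj₀min m hm (by omega))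
      omega
    · exact hdom k
  · rw [hS2 (i' + 1), if_pos ⟨by omega, by omega⟩]
    omega

lemma key : ∀ (D : ℕ) (a b : List ℕ), a.Pairwise (· ≤ ·) → b.Pairwise (· ≤ ·) →
    a.length = b.length → a.sum = b.sum → (∀ k, S b k ≤ S a k) →
    (∑ k ∈ Finset.range (b.length + 1), (S a k - S b k)) ≤ D → b.prod ≤ a.prod := by
  intro D
  induction D with
  | zero =>
    intro a b ha hb hlen hsum hdom hD
    have hall : ∀ k, S a k = S b k := by
      intro k
      rcases le_or_gt k b.length with h | h
      · have hk : k ∈ Finset.range (b.length + 1) := Finset.mem_range.mpr (by omega)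
        have h1 := Finset.sum_eq_zero_iff.mp (Nat.le_zero.mp hD) k hk
        have h2 := hdom k
        omega
      · rw [S_of_le a (by omega), S_of_le b (by omega), hsum]
    rw [eq_of_S_eq a b hlen hall]
  | succ D ih =>
    intro a b ha hb hlen hsum hdom hD
    by_cases hab : a = b
    · rw [hab]
    rcases step a b ha hb hlen hsum hdom hab with
      ⟨b', hs', hl', hsum', hlow, hup, ⟨k₀, hk₀, hstr⟩, hprod⟩
    have hmeas : (∑ k ∈ Finset.range (b'.length + 1), (S a k - S b' k)) ≤ D := by
      rw [hl']
      have hlt : (∑ k ∈ Finset.range (b.length + 1), (S a k - S b' k)) <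
          (∑ k ∈ Finset.range (b.length + 1), (S a k - S b k)) := by
        apply Finset.sum_lt_sum
        · intro i _
          have := hlow i
          omega
        · refine ⟨k₀, Finset.mem_range.mpr (by omega), ?_⟩
          have h2 := hup k₀
          omega
      omega
    exact hprod.trans (ih a b' ha hs' (by omega) (hsum.trans hsum'.symm) hup hmeas)

end LorenzAux

/-- The utility vector sorted in ascending order. -/
def sortedAsc {n : ℕ} (u : Fin n → ℕ) : List ℕ :=
  Multiset.sort (Multiset.ofList (List.ofFn u)) (· ≤ ·)

/-- `u` Lorenz dominates `w`: every prefix sum of the ascending sort of `u`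
is at least the corresponding prefix sum for `w`. -/
def LorenzDom {n : ℕ} (u w : Fin n → ℕ) : Prop :=
  ∀ k ≤ n, ((sortedAsc w).take k).sum ≤ ((sortedAsc u).take k).sum

theorem lorenzDom_max_prod {n : ℕ} (u w : Fin n → ℕ)
    (hsum : ∑ i, u i = ∑ i, w i) (hdom : LorenzDom u w) :
    ∏ i, w i ≤ ∏ i, u i := by
  open LorenzAux in
  set a := sortedAsc u with hadef
  set b := sortedAsc w with hbdef
  have hsa : a.Pairwise (· ≤ ·) := Multiset.pairwise_sort _ _
  have hsb : b.Pairwise (· ≤ ·) := Multiset.pairwise_sort _ _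
  have hma : (a : Multiset ℕ) = (List.ofFn u : Multiset ℕ) := Multiset.sort_eq _ _
  have hmb : (b : Multiset ℕ) = (List.ofFn w : Multiset ℕ) := Multiset.sort_eq _ _
  have hla : a.length = n := by
    simp [hadef, sortedAsc]
  have hlb : b.length = n := by
    simp [hbdef, sortedAsc]
  have hsuma : a.sum = ∑ i, u i := by
    have h := congrArg Multiset.sum hma
    simpa [List.sum_ofFn, List.prod_ofFn] using h
  have hsumb : b.sum = ∑ i, w i := by
    have h := congrArg Multiset.sum hmb
    simpa [List.sum_ofFn, List.prod_ofFn] using h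
  have hproda : a.prod = ∏ i, u i := by
    have h := congrArg Multiset.prod hma
    simpa [List.sum_ofFn, List.prod_ofFn] using h
  have hprodb : b.prod = ∏ i, w i := by
    have h := congrArg Multiset.prod hmb
    simpa [List.sum_ofFn, List.prod_ofFn] using h
  have hdom' : ∀ k, LorenzAux.S b k ≤ LorenzAux.S a k := by
    intro k
    rcases le_or_gt k n with h | h
    · exact hdom k h
    · rw [LorenzAux.S_of_le a (by omega), LorenzAux.S_of_le b (by omega),
        hsuma, hsumb, hsum]
  calc ∏ i, w i = b.prod := hprodb.symm
    _ ≤ a.prod := LorenzAux.key _ a b hsa hsb (by omega) (by rw [hsuma, hsumb, hsum]) hdom' le_rfl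
    _ = ∏ i, u i := hproda
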